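/- Let K/ℚ be a Galois extension of degree s. Then for every positive integer n, the number a_K(n) of nonzero integral ideals of 𝓞_K of absolute norm n is at most d_s(n), the number of s-tuples (n₁, …, n_s) of positive integers with n₁·n₂·⋯·n_s = n. -/

import Mathlib

open NumberField

/-- `a_K(n)`: the number of nonzero integral ideals of `𝓞_K` of absolute norm `n`. -/
noncomputable def aK (K : Type*) [Field K] [NumberField K] (n : ℕ) : ℕ :=
  {I : Ideal (𝓞 K) | Ideal.absNorm I = n}.ncard

/-- `d_s(n)`: the number of `s`-tuples of positive integers whose product is `n`. -/
noncomputable def dcount (s n : ℕ) : ℕ :=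
  {t : Fin s → ℕ | (∀ i, 0 < t i) ∧ ∏ i, t i = n}.ncard

section Aux

open UniqueFactorizationMonoid

/-- Multiplying the map of a multiset over the fibers of `idx` recovers the full product. -/
lemma prod_filter_partition {α β : Type*} [Fintype β] [DecidableEq β]
    (idx : α → β) (g : α → ℕ) (M : Multiset α) :
    ∏ i : β, ((M.filter fun a => idx a = i).map g).prod = (M.map g).prod := by
  classical
  induction M using Multiset.induction with
  | empty => simp
  | cons a M ih =>
    have h : ∀ i : β, ((Multiset.filter (fun a' => idx a' = i) (a ::ₘ M)).map g).prod
        = (if idx a = i then g a else 1) *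
          ((M.filter fun a' => idx a' = i).map g).prod := by
      intro i
      rw [Multiset.filter_cons]
      split_ifs with h <;> simp
    simp_rw [h]
    rw [Finset.prod_mul_distrib, ih, Finset.prod_ite_eq, if_pos (Finset.mem_univ _),
      Multiset.map_cons, Multiset.prod_cons]

lemma sum_map_ite {α : Type*} [DecidableEq α] (M : Multiset α) (P : α) (f : ℕ) (g : α → ℕ)
    (hg : ∀ Q ∈ M, g Q = if Q = P then f else 0) : (M.map g).sum = f * M.count P := by
  induction M using Multiset.induction with
  | empty => simp
  | cons a M ih =>
    rw [Multiset.map_cons, Multiset.sum_cons,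
      ih (fun Q hQ => hg Q (Multiset.mem_cons_of_mem hQ)),
      hg a (Multiset.mem_cons_self a M)]
    rcases eq_or_ne a P with rfl | h
    · rw [if_pos rfl, Multiset.count_cons_self, Nat.mul_succ, Nat.add_comm]
    · rw [if_neg h, Multiset.count_cons_of_ne (Ne.symm h), Nat.zero_add]

lemma factorization_multiset_prod (M : Multiset ℕ) (hM : ∀ x ∈ M, x ≠ 0) (p : ℕ) :
    M.prod.factorization p = (M.map fun x => x.factorization p).sum := by
  induction M using Multiset.induction with
  | empty => simp
  | cons a M ih =>
    have ha : a ≠ 0 := hM a (Multiset.mem_cons_self _ _)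
    have hM' : ∀ x ∈ M, x ≠ 0 := fun x hx => hM x (Multiset.mem_cons_of_mem hx)
    have hMp : M.prod ≠ 0 := Multiset.prod_ne_zero (fun h0 => hM' 0 h0 rfl)
    rw [Multiset.prod_cons]
    simp [Nat.factorization_mul ha hMp, ih hM']

variable {K : Type*} [Field K] [NumberField K]

/-- The set of (nonzero) prime ideals of `𝓞 K` whose norm is a power of `q`. -/
def primesAt (K : Type*) [Field K] [NumberField K] (q : ℕ) : Set (Ideal (𝓞 K)) :=
  {P | Prime P ∧ (Ideal.absNorm P).minFac = q}

lemma absNorm_isPrimePow {P : Ideal (𝓞 K)} (hP : Prime P) :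
    IsPrimePow (Ideal.absNorm P) := by
  have hbot : P ≠ ⊥ := hP.ne_zero
  haveI : P.IsPrime := Ideal.isPrime_of_prime hP
  haveI : P.IsMaximal := Ideal.IsPrime.isMaximal ‹_› hbot
  letI : Fintype (𝓞 K ⧸ P) := @Fintype.ofFinite _ (Ideal.finiteQuotientOfFreeOfNeBot P hbot)
  letI : Field (𝓞 K ⧸ P) := Ideal.Quotient.field P
  obtain ⟨p, -, k, hp, hcard⟩ := FiniteField.card' (𝓞 K ⧸ P)
  refine ⟨p, k, hp.prime, k.pos, ?_⟩
  rw [Ideal.absNorm_apply, Submodule.cardQuot_apply, Nat.card_eq_fintype_card, hcard]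

lemma facpos {P : Ideal (𝓞 K)} (hP : Prime P) :
    0 < (Ideal.absNorm P).factorization (Ideal.absNorm P).minFac := by
  have pp := absNorm_isPrimePow hP
  exact Nat.Prime.factorization_pos_of_dvd (Nat.minFac_prime pp.ne_one) pp.ne_zero
    (Nat.minFac_dvd _)

lemma primesAt_subset [DecidableEq (Ideal (𝓞 K))] (q : ℕ) (hq : q.Prime) :
    primesAt K q ⊆
      ↑(normalizedFactors (Ideal.span {((q : ℕ) : 𝓞 K)} : Ideal (𝓞 K))).toFinset := by
  classical
  intro P hP
  have hq0 : ((q : ℕ) : 𝓞 K) ≠ 0 := Nat.cast_ne_zero.mpr hq.ne_zero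
  have hJ0 : (Ideal.span {((q : ℕ) : 𝓞 K)} : Ideal (𝓞 K)) ≠ ⊥ := by
    simpa [Ideal.span_singleton_eq_bot] using hq0
  have hmem : ((q : ℕ) : 𝓞 K) ∈ P := by
    have pp := absNorm_isPrimePow hP.1
    have hPP : P.IsPrime := Ideal.isPrime_of_prime hP.1
    have h1 : (↑(Ideal.absNorm P) : 𝓞 K) ∈ P := Ideal.absNorm_mem P
    rw [← pp.minFac_pow_factorization_eq] at h1
    rw [hP.2] at h1
    push_cast at h1
    exact hPP.mem_of_pow_mem _ h1
  have hdvd : P ∣ Ideal.span {((q : ℕ) : 𝓞 K)} := by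
    rw [Ideal.dvd_iff_le, Ideal.span_le]
    simpa using hmem
  rw [Finset.mem_coe, Multiset.mem_toFinset, mem_normalizedFactors_iff hJ0]
  exact ⟨hP.1, hdvd⟩

lemma primesAt_finite (q : ℕ) : (primesAt K q).Finite := by
  classical
  by_cases hq : q.Prime
  · exact Set.Finite.subset
      ((normalizedFactors (Ideal.span {((q : ℕ) : 𝓞 K)} : Ideal (𝓞 K))).toFinset.finite_toSet)
      (primesAt_subset q hq)
  · have : primesAt K q = ∅ := by
      ext P
      simp only [Set.mem_empty_iff_false, iff_false]
      rintro ⟨hP, rfl⟩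
      exact hq (Nat.minFac_prime (absNorm_isPrimePow hP).ne_one)
    rw [this]; exact Set.finite_empty

lemma primesAt_ncard_le (q : ℕ) : (primesAt K q).ncard ≤ Module.finrank ℚ K := by
  by_cases hq : q.Prime
  · classical
    have hfin := primesAt_finite (K := K) q
    have hq0 : ((q : ℕ) : 𝓞 K) ≠ 0 := Nat.cast_ne_zero.mpr hq.ne_zero
    set J : Ideal (𝓞 K) := Ideal.span {((q : ℕ) : 𝓞 K)} with hJ
    have hJnorm : Ideal.absNorm J = q ^ Module.finrank ℚ K := by
      have hcast : ((q : ℕ) : 𝓞 K) = algebraMap ℤ (𝓞 K) (q : ℤ) := by push_cast; rfl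
      have hb := Algebra.norm_algebraMap_of_basis (NumberField.RingOfIntegers.basis K) (q : ℤ)
      rw [hJ, hcast, Ideal.absNorm_span_singleton, hb, ← Nat.cast_pow, Int.natAbs_natCast,
        ← Module.finrank_eq_card_chooseBasisIndex, NumberField.RingOfIntegers.rank]
    set F : Finset (Ideal (𝓞 K)) := hfin.toFinset with hF
    have hFmem : ∀ P ∈ F, P ∈ primesAt K q := by
      intro P hP; rwa [hF, Set.Finite.mem_toFinset] at hP
    have hdvdJ : ∀ P ∈ F, P ∣ J := by
      intro P hP
      have h := primesAt_subset (K := K) q hq (hFmem P hP)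
      simp only [Finset.coe_sort_coe, Multiset.mem_toFinset, Finset.mem_coe] at h
      have hJ0 : J ≠ 0 := by
        simpa [hJ, Ideal.span_singleton_eq_bot, Submodule.zero_eq_bot] using hq0
      exact (mem_normalizedFactors_iff hJ0).mp h |>.2
    have hprod : (∏ P ∈ F, P) ∣ J :=
      Finset.prod_primes_dvd J (fun P hP => (hFmem P hP).1) hdvdJ
    have hpowdvd : q ^ F.card ∣ q ^ Module.finrank ℚ K := by
      calc q ^ F.card = ∏ _P ∈ F, q := by rw [Finset.prod_const]
        _ ∣ ∏ P ∈ F, Ideal.absNorm P := by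
            refine Finset.prod_dvd_prod_of_dvd _ _ (fun P hP => ?_)
            have := (hFmem P hP).2
            exact this ▸ Nat.minFac_dvd _
        _ = Ideal.absNorm (∏ P ∈ F, P) := (map_prod Ideal.absNorm _ _).symm
        _ ∣ Ideal.absNorm J := map_dvd Ideal.absNorm hprod
        _ = q ^ Module.finrank ℚ K := hJnorm
    have hcard : F.card ≤ Module.finrank ℚ K :=
      (Nat.pow_dvd_pow_iff_le_right hq.one_lt).mp hpowdvd
    rwa [Set.ncard_eq_toFinset_card (primesAt K q) hfin]
  · have : primesAt K q = ∅ := by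
      ext P
      simp only [Set.mem_empty_iff_false, iff_false]
      rintro ⟨hP, rfl⟩
      exact hq (Nat.minFac_prime (absNorm_isPrimePow hP).ne_one)
    simp [this]

lemma exists_idx (s : ℕ) (hs : Module.finrank ℚ K = s) :
    ∃ idx : Ideal (𝓞 K) → Fin s, ∀ q, Set.InjOn idx (primesAt K q) := by
  classical
  have hspos : 0 < s := hs ▸ Module.finrank_pos
  have key : ∀ q : ℕ, ∃ f : Ideal (𝓞 K) → Fin s, Set.InjOn f (primesAt K q) := by
    intro q
    have hfin := primesAt_finite (K := K) q
    haveI := hfin.fintype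
    have hcard : Fintype.card (primesAt K q) ≤ Fintype.card (Fin s) := by
      rw [Fintype.card_fin]
      calc Fintype.card (primesAt K q) = Nat.card (primesAt K q) :=
            (Nat.card_eq_fintype_card).symm
        _ = (primesAt K q).ncard := (Nat.card_coe_set_eq _)
        _ ≤ s := hs ▸ primesAt_ncard_le q
    obtain ⟨e⟩ := Function.Embedding.nonempty_of_card_le hcard
    refine ⟨fun P => if h : P ∈ primesAt K q then e ⟨P, h⟩ else ⟨0, hspos⟩, ?_⟩
    intro P hP Q hQ hPQ
    simp only [dif_pos hP, dif_pos hQ] at hPQ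
    exact Subtype.ext_iff.mp (e.injective hPQ)
  choose f hf using key
  refine ⟨fun P => f ((Ideal.absNorm P).minFac) P, fun q P hP Q hQ h => ?_⟩
  have hP' : (Ideal.absNorm P).minFac = q := hP.2
  have hQ' : (Ideal.absNorm Q).minFac = q := hQ.2
  have h' : f ((Ideal.absNorm P).minFac) P = f ((Ideal.absNorm Q).minFac) Q := h
  rw [hP', hQ'] at h'
  exact hf q hP hQ h'

variable {s : ℕ}

/-- The tuple associated to an ideal by grouping its prime factors by index. -/
noncomputable def PhiAux (idx : Ideal (𝓞 K) → Fin s) (I : Ideal (𝓞 K)) (i : Fin s) : ℕ :=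
  (((normalizedFactors I).filter (fun P => idx P = i)).map Ideal.absNorm).prod

lemma PhiAux_pos (idx : Ideal (𝓞 K) → Fin s) (I : Ideal (𝓞 K)) (i : Fin s) :
    0 < PhiAux idx I i := by
  rw [PhiAux]
  refine Nat.pos_of_ne_zero (Multiset.prod_ne_zero ?_)
  intro h0
  obtain ⟨Q, hQ, hQ0⟩ := Multiset.mem_map.mp h0
  have hQp : Prime Q := prime_of_normalized_factor Q (Multiset.mem_of_mem_filter hQ)
  exact hQp.ne_zero ((Ideal.absNorm_eq_zero_iff.mp hQ0).trans Submodule.zero_eq_bot.symm)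

lemma PhiAux_prod (idx : Ideal (𝓞 K) → Fin s) {I : Ideal (𝓞 K)} (hI : I ≠ ⊥) :
    ∏ i, PhiAux idx I i = Ideal.absNorm I := by
  simp_rw [PhiAux]
  rw [prod_filter_partition idx Ideal.absNorm (normalizedFactors I)]
  rw [← map_multiset_prod Ideal.absNorm]
  congr 1
  exact associated_iff_eq.mp (prod_normalizedFactors hI)

lemma PhiAux_key [DecidableEq (Ideal (𝓞 K))] (idx : Ideal (𝓞 K) → Fin s)
    (hidx : ∀ q, Set.InjOn idx (primesAt K q))
    {I : Ideal (𝓞 K)} (hI : I ≠ ⊥) {P : Ideal (𝓞 K)} (hP : Prime P) :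
    (PhiAux idx I (idx P)).factorization (Ideal.absNorm P).minFac
      = (Ideal.absNorm P).factorization (Ideal.absNorm P).minFac
        * (normalizedFactors I).count P := by
  classical
  set p := (Ideal.absNorm P).minFac with hp
  set f := (Ideal.absNorm P).factorization p with hfdef
  have hPp : P ∈ primesAt K p := ⟨hP, rfl⟩
  set Mf := (normalizedFactors I).filter (fun Q => idx Q = idx P) with hMf
  have hent : ∀ x ∈ Mf.map Ideal.absNorm, x ≠ 0 := by
    intro x hx h0
    obtain ⟨Q, hQ, hQ0⟩ := Multiset.mem_map.mp hx
    have hQp : Prime Q := prime_of_normalized_factor Q (Multiset.mem_of_mem_filter hQ)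
    exact hQp.ne_zero ((Ideal.absNorm_eq_zero_iff.mp (hQ0.trans h0)).trans
      Submodule.zero_eq_bot.symm)
  have h1 : (PhiAux idx I (idx P)).factorization p
      = (Mf.map (fun Q => (Ideal.absNorm Q).factorization p)).sum := by
    rw [PhiAux, factorization_multiset_prod _ hent, Multiset.map_map]
    rfl
  have h2 : ∀ Q ∈ Mf, (Ideal.absNorm Q).factorization p = if Q = P then f else 0 := by
    intro Q hQm
    have hQmem := Multiset.mem_filter.mp hQm
    have hQp : Prime Q := prime_of_normalized_factor Q hQmem.1
    by_cases hqp : (Ideal.absNorm Q).minFac = p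
    · have hQP : Q = P := hidx p ⟨hQp, hqp⟩ hPp hQmem.2
      rw [if_pos hQP, hQP]
    · have hQne : Q ≠ P := fun h => hqp (by rw [h])
      rw [if_neg hQne]
      have pp := absNorm_isPrimePow hQp
      conv_lhs => rw [← pp.minFac_pow_factorization_eq]
      rw [Nat.Prime.factorization_pow (Nat.minFac_prime pp.ne_one)]
      exact Finsupp.single_eq_of_ne' hqp
  rw [h1, sum_map_ite Mf P f _ h2, hMf, Multiset.count_filter, if_pos rfl]

lemma PhiAux_inj (idx : Ideal (𝓞 K) → Fin s)
    (hidx : ∀ q, Set.InjOn idx (primesAt K q))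
    {I J : Ideal (𝓞 K)} (hI : I ≠ ⊥) (hJ : J ≠ ⊥)
    (h : PhiAux idx I = PhiAux idx J) : I = J := by
  classical
  have hM : normalizedFactors I = normalizedFactors J := by
    rw [Multiset.ext]
    intro P
    by_cases hP : Prime P
    · have k1 := PhiAux_key idx hidx hI hP
      have k2 := PhiAux_key idx hidx hJ hP
      rw [h] at k1
      have := k1.symm.trans k2
      exact Nat.eq_of_mul_eq_mul_left (facpos hP) this
    · rw [Multiset.count_eq_zero_of_notMem
        (fun hmem => hP (prime_of_normalized_factor P hmem)),
        Multiset.count_eq_zero_of_notMem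
        (fun hmem => hP (prime_of_normalized_factor P hmem))]
  calc I = (normalizedFactors I).prod :=
        (associated_iff_eq.mp (prod_normalizedFactors hI)).symm
    _ = (normalizedFactors J).prod := by rw [hM]
    _ = J := associated_iff_eq.mp (prod_normalizedFactors hJ)

end Aux

/-- For a degree-`s` Galois extension `K/ℚ` and every positive integer `n`,
`a_K(n) ≤ d_s(n)`. -/
theorem stmt13 (K : Type*) [Field K] [NumberField K] [IsGalois ℚ K]
    (s : ℕ) (hs : Module.finrank ℚ K = s) (n : ℕ) (hn : 0 < n) :
    aK K n ≤ dcount s n := by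
  classical
  obtain ⟨idx, hidx⟩ := exists_idx (K := K) s hs
  set A := {I : Ideal (𝓞 K) | Ideal.absNorm I = n} with hA
  set T := {t : Fin s → ℕ | (∀ i, 0 < t i) ∧ ∏ i, t i = n} with hT
  have hA0 : ∀ I ∈ A, I ≠ ⊥ := by
    intro I hI h0
    rw [hA] at hI
    rw [h0] at hI
    simp only [Set.mem_setOf_eq, Ideal.absNorm_eq_zero_iff.mpr rfl] at hI
    exact hn.ne' hI.symm
  have hmaps : ∀ I ∈ A, PhiAux idx I ∈ T := by
    intro I hI
    exact ⟨fun i => PhiAux_pos idx I i, by rw [PhiAux_prod idx (hA0 I hI)]; exact hI⟩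
  have hinj : Set.InjOn (PhiAux idx) A :=
    fun I hI J hJ h => PhiAux_inj idx hidx (hA0 I hI) (hA0 J hJ) h
  have hTfin : T.Finite := by
    have hsub : T ⊆ Set.pi Set.univ (fun _ : Fin s => Set.Iic n) := by
      rintro t ⟨hpos, hprod⟩ i _
      exact Nat.le_of_dvd hn (hprod ▸ Finset.dvd_prod_of_mem t (Finset.mem_univ i))
    exact (Set.Finite.pi (fun _ => Set.finite_Iic n)).subset hsub
  calc aK K n = A.ncard := rfl
    _ = (PhiAux idx '' A).ncard := (Set.ncard_image_of_injOn hinj).symm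
    _ ≤ T.ncard := Set.ncard_le_ncard (Set.image_subset_iff.mpr hmaps) hTfin
    _ = dcount s n := rfl
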